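/- Let F ∈ ℂ^{N×N} be Hermitian positive semidefinite of rank s < N with smallest nonzero eigenvalue λ_s(F), and let F̂ = F + E be Hermitian with 2‖E‖ < λ_s(F). Let V₂ and V̂₂ have orthonormal columns spanning, respectively, the eigenspace of F for eigenvalue 0 and the span of eigenvectors of F̂ corresponding to its N−s smallest eigenvalues. Define R(ω) = ‖V₂*φ(ω)‖/‖φ(ω)‖ and R̂(ω) = ‖V̂₂*φ(ω)‖/‖φ(ω)‖ where φ(ω) = (1, e^{2πiω}, …, e^{2πi(N-1)ω})ᵀ. Then sup_{ω ∈ [0,1)} |R̂(ω) − R(ω)| ≤ 2‖E‖ / λ_s(F). -/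

import Mathlib

open Complex Matrix
open scoped ComplexOrder

/-- Spectral (ℓ²-operator) norm of a square complex matrix. -/
noncomputable def specNorm {N : ℕ} (M : Matrix (Fin N) (Fin N) ℂ) : ℝ :=
  ‖Matrix.toEuclideanCLM (𝕜 := ℂ) M‖

/-- Euclidean norm of a complex vector. -/
noncomputable def evNorm {m : ℕ} (v : Fin m → ℂ) : ℝ :=
  Real.sqrt (∑ i, ‖v i‖^2)

namespace Stmt7Aux

noncomputable def ee {N : ℕ} : (Fin N → ℂ) ≃ EuclideanSpace ℂ (Fin N) := (WithLp.equiv 2 _).symm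

local notation "⟪" x ", " y "⟫" => @inner ℂ _ _ x y

variable {N m : ℕ}

lemma evNorm_eq (v : Fin N → ℂ) : evNorm v = ‖ee v‖ := by
  rw [EuclideanSpace.norm_eq]
  simp [evNorm, ee, WithLp.equiv]

lemma inner_ee (x y : Fin N → ℂ) : ⟪ee x, ee y⟫ = ∑ i, (starRingEnd ℂ) (x i) * y i := by
  rw [PiLp.inner_apply]; simp [ee, WithLp.equiv, RCLike.inner_apply]
  exact Finset.sum_congr rfl fun i _ => mul_comm _ _

lemma lin_ee (M : Matrix (Fin N) (Fin N) ℂ) (x : Fin N → ℂ) :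
    Matrix.toEuclideanLin M (ee x) = ee (M *ᵥ x) :=
  rfl

lemma ee_symm_lin (M : Matrix (Fin N) (Fin N) ℂ) (z : EuclideanSpace ℂ (Fin N)) :
    ee.symm (Matrix.toEuclideanLin M z) = M *ᵥ (ee.symm z) :=
  rfl

lemma norm_lin_le (M : Matrix (Fin N) (Fin N) ℂ) (z : EuclideanSpace ℂ (Fin N)) :
    ‖Matrix.toEuclideanLin M z‖ ≤ specNorm M * ‖z‖ := by
  have h := (Matrix.toEuclideanCLM (𝕜 := ℂ) M).le_opNorm z
  have he : (Matrix.toEuclideanCLM (𝕜 := ℂ) M) z = Matrix.toEuclideanLin M z := by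
    rw [← Matrix.coe_toEuclideanCLM_eq_toEuclideanLin]; rfl
  rw [← he]; exact h

lemma lin_symm (M : Matrix (Fin N) (Fin N) ℂ) (hM : M.IsHermitian)
    (x y : EuclideanSpace ℂ (Fin N)) :
    ⟪Matrix.toEuclideanLin M x, y⟫ = ⟪x, Matrix.toEuclideanLin M y⟫ :=
  (Matrix.isHermitian_iff_isSymmetric.mp hM) x y

/-- columns of a matrix as Euclidean vectors -/
noncomputable def col (V : Matrix (Fin N) (Fin m) ℂ) (k : Fin m) : EuclideanSpace ℂ (Fin N) :=
  ee (fun i => V i k)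

lemma orthonormal_col (V : Matrix (Fin N) (Fin m) ℂ) (hV : Vᴴ * V = 1) :
    Orthonormal ℂ (col V) := by
  rw [orthonormal_iff_ite]
  intro k l
  have : (Vᴴ * V) k l = (1 : Matrix (Fin m) (Fin m) ℂ) k l := by rw [hV]
  rw [Matrix.mul_apply] at this
  simp only [Matrix.one_apply] at this
  rw [col, col, inner_ee]
  simpa [Matrix.conjTranspose_apply] using this

lemma mulVec_conjT (V : Matrix (Fin N) (Fin m) ℂ) (z : Fin N → ℂ) (k : Fin m) :
    (Vᴴ *ᵥ z) k = ⟪col V k, ee z⟫ := by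
  rw [col, inner_ee, Matrix.mulVec, dotProduct]
  simp [Matrix.conjTranspose_apply]

lemma mulVec_eq_sum_col (V : Matrix (Fin N) (Fin m) ℂ) (c : Fin m → ℂ) :
    ee (V *ᵥ c) = ∑ k, c k • col V k := by
  apply ee.symm.injective
  funext i
  simp only [Equiv.symm_apply_apply]
  rw [Matrix.mulVec, dotProduct]
  have : ee.symm (∑ k, c k • col V k) = ∑ k, c k • (fun i => V i k) := by
    simp only [ee, col]
    simp [WithLp.equiv]
  rw [this]
  simp [mul_comm]

end Stmt7Aux

namespace Stmt7Aux
local notation "⟪" x ", " y "⟫" => @inner ℂ _ _ x y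

variable {N m : ℕ}
variable {H : Type*} [NormedAddCommGroup H] [InnerProductSpace ℂ H]

/-- Bessel -/
lemma bessel {ι : Type*} [Fintype ι] {v : ι → H} (hv : Orthonormal ℂ v) (z : H) :
    Real.sqrt (∑ k, ‖⟪v k, z⟫‖^2) ≤ ‖z‖ := by
  have h := hv.sum_inner_products_le (s := Finset.univ) z
  have := Real.sqrt_le_sqrt h
  rwa [Real.sqrt_sq (norm_nonneg z)] at this

noncomputable def proj {ι : Type*} [Fintype ι] (v : ι → H) (z : H) : H := ∑ k, ⟪v k, z⟫ • v k

lemma inner_proj_diff {ι : Type*} [Fintype ι] {v : ι → H} (hv : Orthonormal ℂ v) (z : H) (k : ι) :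
    ⟪v k, z - proj v z⟫ = 0 := by
  rw [inner_sub_right, proj, hv.inner_right_fintype]
  ring

lemma norm_sum_sq {ι : Type*} [Fintype ι] {v : ι → H} (hv : Orthonormal ℂ v) (c : ι → ℂ) :
    ‖∑ k, c k • v k‖^2 = ∑ k, ‖c k‖^2 := by
  have h : ⟪∑ k, c k • v k, ∑ k, c k • v k⟫ = ∑ k, (starRingEnd ℂ) (c k) * c k := by
    rw [sum_inner]
    congr 1; funext k
    rw [inner_smul_left, hv.inner_right_fintype]
  have h2 : RCLike.re ⟪∑ k, c k • v k, ∑ k, c k • v k⟫ =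
      RCLike.re (∑ k, (starRingEnd ℂ) (c k) * c k) := congrArg _ h
  rw [inner_self_eq_norm_sq] at h2
  rw [h2, map_sum]
  congr 1; funext k
  rw [RCLike.conj_mul]
  norm_cast

lemma norm_proj_sq {ι : Type*} [Fintype ι] {v : ι → H} (hv : Orthonormal ℂ v) (z : H) :
    ‖proj v z‖^2 = ∑ k, ‖⟪v k, z⟫‖^2 := norm_sum_sq hv _

lemma inner_orth {ι : Type*} [Fintype ι] {v : ι → H} (c : ι → ℂ) {z : H}
    (hz : ∀ k, ⟪v k, z⟫ = 0) : ⟪∑ k, c k • v k, z⟫ = 0 := by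
  rw [sum_inner]
  refine Finset.sum_eq_zero fun k _ => ?_
  rw [inner_smul_left, hz k, mul_zero]

lemma norm_diff_proj_le {ι : Type*} [Fintype ι] {v : ι → H} (hv : Orthonormal ℂ v) (z : H) :
    ‖z - proj v z‖ ≤ ‖z‖ := by
  have horth : ⟪proj v z, z - proj v z⟫ = 0 :=
    inner_orth _ (fun k => inner_proj_diff hv z k)
  have hpyt : ‖proj v z‖^2 + ‖z - proj v z‖^2 = ‖z‖^2 := by
    have := norm_add_sq (𝕜 := ℂ) (proj v z) (z - proj v z)
    rw [add_sub_cancel] at this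
    have hre : RCLike.re ⟪proj v z, z - proj v z⟫ = 0 := by rw [horth]; simp
    rw [hre] at this
    linarith
  have h1 : ‖z - proj v z‖^2 ≤ ‖z‖^2 := by nlinarith [sq_nonneg ‖proj v z‖]
  nlinarith [norm_nonneg (z - proj v z), norm_nonneg z]

lemma norm_proj_le {ι : Type*} [Fintype ι] {v : ι → H} (hv : Orthonormal ℂ v) (z : H) :
    ‖proj v z‖ ≤ ‖z‖ := by
  have := norm_proj_sq hv z
  have hb := hv.sum_inner_products_le (s := Finset.univ) z
  nlinarith [norm_nonneg (proj v z), norm_nonneg z]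

/-- coefficients vanish outside of a subfamily's span -/
lemma inner_eq_zero_of_mem_span {ι : Type*} [DecidableEq ι] {v : ι → H} (hv : Orthonormal ℂ v)
    (J : Set ι) {z : H} (hz : z ∈ Submodule.span ℂ (v '' J)) {j : ι} (hj : j ∉ J) :
    ⟪v j, z⟫ = 0 := by
  induction hz using Submodule.span_induction with
  | mem x hx =>
    obtain ⟨i, hi, rfl⟩ := hx
    have : j ≠ i := fun h => hj (h ▸ hi)
    simpa using (orthonormal_iff_ite.mp hv j i).trans (by simp [this])
  | zero => simp
  | add x y _ _ hx hy => rw [inner_add_right, hx, hy, add_zero]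
  | smul c x _ hx => rw [inner_smul_right, hx, mul_zero]

lemma exists_nonzero_inter {H : Type*} [NormedAddCommGroup H] [InnerProductSpace ℂ H]
    [FiniteDimensional ℂ H]
    (p q : Submodule ℂ H) (h : Module.finrank ℂ H < Module.finrank ℂ p + Module.finrank ℂ q) :
    ∃ z : H, z ≠ 0 ∧ z ∈ p ∧ z ∈ q := by
  have hsum := Submodule.finrank_sup_add_finrank_inf_eq p q
  have hle : Module.finrank ℂ ↥(p ⊔ q) ≤ Module.finrank ℂ H := Submodule.finrank_le _
  have hpos : 0 < Module.finrank ℂ ↥(p ⊓ q) := by omega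
  have : Nontrivial ↥(p ⊓ q) := Module.finrank_pos_iff.mp hpos
  obtain ⟨⟨z, hz⟩, h0⟩ := exists_ne (0 : ↥(p ⊓ q))
  refine ⟨z, ?_, (Submodule.mem_inf.mp hz).1, (Submodule.mem_inf.mp hz).2⟩
  intro h
  exact h0 (Subtype.ext h)

end Stmt7Aux

namespace Stmt7Aux
local notation "⟪" x ", " y "⟫" => @inner ℂ _ _ x y

variable {N : ℕ}
variable {H : Type*} [NormedAddCommGroup H] [InnerProductSpace ℂ H]

lemma parseval [Fintype (Fin N)] (b : OrthonormalBasis (Fin N) ℂ H) (z : H) :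
    ‖z‖^2 = ∑ j, ‖⟪b j, z⟫‖^2 := by
  have h := b.sum_inner_mul_inner z z
  have h2 : RCLike.re ⟪z, z⟫ = RCLike.re (∑ j, ⟪z, b j⟫ * ⟪b j, z⟫) := (congrArg _ h).symm
  rw [inner_self_eq_norm_sq] at h2
  rw [h2, map_sum]
  congr 1; funext j
  rw [← inner_conj_symm z (b j), RCLike.conj_mul]
  norm_cast

lemma coef_lin (b : OrthonormalBasis (Fin N) ℂ H) (T : H →ₗ[ℂ] H)
    (hsym : ∀ x y : H, ⟪T x, y⟫ = ⟪x, T y⟫) (μ : Fin N → ℝ)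
    (hb : ∀ j, T (b j) = (μ j : ℂ) • b j) (z : H) (j : Fin N) :
    ⟪b j, T z⟫ = (μ j : ℂ) * ⟪b j, z⟫ := by
  rw [← hsym, hb, inner_smul_left]
  rw [Complex.conj_ofReal]

lemma quadform (b : OrthonormalBasis (Fin N) ℂ H) (T : H →ₗ[ℂ] H)
    (hsym : ∀ x y : H, ⟪T x, y⟫ = ⟪x, T y⟫) (μ : Fin N → ℝ)
    (hb : ∀ j, T (b j) = (μ j : ℂ) • b j) (z : H) :
    RCLike.re ⟪z, T z⟫ = ∑ j, μ j * ‖⟪b j, z⟫‖^2 := by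
  have h := b.sum_inner_mul_inner z (T z)
  rw [← h, map_sum]
  congr 1; funext j
  rw [coef_lin b T hsym μ hb z j, ← inner_conj_symm z (b j)]
  have : (starRingEnd ℂ) ⟪b j, z⟫ * ((μ j : ℂ) * ⟪b j, z⟫)
      = (μ j : ℂ) * ((starRingEnd ℂ) ⟪b j, z⟫ * ⟪b j, z⟫) := by ring
  rw [this, RCLike.conj_mul]
  simp [← Complex.ofReal_pow]

lemma norm_lin_sq (b : OrthonormalBasis (Fin N) ℂ H) (T : H →ₗ[ℂ] H)
    (hsym : ∀ x y : H, ⟪T x, y⟫ = ⟪x, T y⟫) (μ : Fin N → ℝ)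
    (hb : ∀ j, T (b j) = (μ j : ℂ) • b j) (z : H) :
    ‖T z‖^2 = ∑ j, (μ j)^2 * ‖⟪b j, z⟫‖^2 := by
  rw [parseval b (T z)]
  congr 1; funext j
  rw [coef_lin b T hsym μ hb z j]
  rw [norm_mul]
  rw [mul_pow]
  congr 1
  rw [Complex.norm_real, Real.norm_eq_abs]
  exact _root_.sq_abs (μ j)

lemma finrank_span_orthonormal {ι : Type*} [Fintype ι] [DecidableEq ι] {v : ι → H}
    (hv : Orthonormal ℂ v) (J : Finset ι) :
    Module.finrank ℂ (Submodule.span ℂ (v '' (J : Set ι))) = J.card := by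
  have himg : v '' (J : Set ι) = Set.range (fun j : {x // x ∈ J} => v j) := by
    ext y; constructor
    · rintro ⟨i, hi, rfl⟩; exact ⟨⟨i, hi⟩, rfl⟩
    · rintro ⟨⟨i, hi⟩, rfl⟩; exact ⟨i, hi, rfl⟩
  rw [himg, finrank_span_eq_card]
  · simp
  · exact (hv.linearIndependent).comp _ Subtype.coe_injective

lemma proj_add {ι : Type*} [Fintype ι] (v : ι → H) (y z : H) :
    proj v (y + z) = proj v y + proj v z := by
  rw [proj, proj, proj, ← Finset.sum_add_distrib]
  congr 1; funext k
  rw [inner_add_right, add_smul]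

lemma norm_proj_eq {ι : Type*} [Fintype ι] {v : ι → H} (hv : Orthonormal ℂ v) (z : H) :
    ‖proj v z‖ = Real.sqrt (∑ k, ‖⟪v k, z⟫‖^2) := by
  rw [← norm_proj_sq hv z, Real.sqrt_sq (norm_nonneg _)]

end Stmt7Aux

open Stmt7Aux

local notation "⟪" x ", " y "⟫" => @inner ℂ _ _ x y

set_option maxHeartbeats 3000000 in
theorem stmt7 {N s : ℕ} (hs : s < N)
    (F E Fh : Matrix (Fin N) (Fin N) ℂ)
    (hF : F.IsHermitian) (hPSD : F.PosSemidef) (hrank : F.rank = s)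
    (hFh : Fh = F + E) (hFhHerm : Fh.IsHermitian)
    (lam : ℝ) (hlam_mem : lam ∈ Set.range hF.eigenvalues) (hlam_pos : 0 < lam)
    (hlam_min : ∀ i, hF.eigenvalues i ≠ 0 → lam ≤ hF.eigenvalues i)
    (hE : 2 * specNorm E < lam)
    (V₂ : Matrix (Fin N) (Fin (N - s)) ℂ) (hV₂orth : V₂ᴴ * V₂ = 1)
    (hV₂ker : ∀ v : Fin N → ℂ, F.mulVec v = 0 ↔ ∃ c, v = V₂.mulVec c)
    (Vh₂ : Matrix (Fin N) (Fin (N - s)) ℂ) (hVh₂orth : Vh₂ᴴ * Vh₂ = 1)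
    (ι : Fin (N - s) → Fin N) (hι : Function.Injective ι)
    (hVh₂eig : ∀ k, Fh.mulVec (fun i => Vh₂ i k) =
      (hFhHerm.eigenvalues (ι k) : ℂ) • (fun i => Vh₂ i k))
    (hsmall : ∀ k, ∀ j, j ∉ Set.range ι →
      hFhHerm.eigenvalues (ι k) ≤ hFhHerm.eigenvalues j)
    (φ : ℝ → (Fin N → ℂ))
    (hφ : ∀ (x : ℝ) (n : Fin N), φ x n = Complex.exp (2 * Real.pi * Complex.I * (n : ℕ) * x)) :
    ∀ x ∈ Set.Ico (0 : ℝ) 1,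
      |evNorm (Vh₂ᴴ.mulVec (φ x)) / evNorm (φ x) -
        evNorm (V₂ᴴ.mulVec (φ x)) / evNorm (φ x)| ≤ 2 * specNorm E / lam := by
  classical
  set ε := specNorm E with hεdef
  have hεnn : 0 ≤ ε := norm_nonneg _
  have hεlam : 2 * ε < lam := hE
  have hlamε : 0 < lam - ε := by linarith
  set w : Fin (N - s) → EuclideanSpace ℂ (Fin N) := Stmt7Aux.col V₂ with hwdef
  set wh : Fin (N - s) → EuclideanSpace ℂ (Fin N) := Stmt7Aux.col Vh₂ with hwhdef
  have hw : Orthonormal ℂ w := Stmt7Aux.orthonormal_col V₂ hV₂orth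
  have hwo : Orthonormal ℂ wh := Stmt7Aux.orthonormal_col Vh₂ hVh₂orth
  set T := Matrix.toEuclideanLin F with hTdef
  set Th := Matrix.toEuclideanLin Fh with hThdef
  set Eop := Matrix.toEuclideanLin E with hEopdef
  have hsplit : ∀ z, Th z = T z + Eop z := by
    intro z
    rw [hThdef, hFh, map_add]
    rfl
  have hEople : ∀ z, ‖Eop z‖ ≤ ε * ‖z‖ := fun z => Stmt7Aux.norm_lin_le E z
  have hTsym : ∀ x y, ⟪T x, y⟫ = ⟪x, T y⟫ := Stmt7Aux.lin_symm F hF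
  have hThsym : ∀ x y, ⟪Th x, y⟫ = ⟪x, Th y⟫ := Stmt7Aux.lin_symm Fh hFhHerm
  set μ := hFhHerm.eigenvalues with hμdef
  set ub := hFhHerm.eigenvectorBasis with hubdef
  have hub : ∀ j, Th (ub j) = (μ j : ℂ) • ub j := by
    intro j
    have h := hFhHerm.mulVec_eigenvectorBasis j
    apply Stmt7Aux.ee.symm.injective
    rw [hThdef, Stmt7Aux.ee_symm_lin]
    have h1 : Stmt7Aux.ee.symm (ub j) = ⇑(ub j) := rfl
    have h2 : Stmt7Aux.ee.symm ((μ j : ℂ) • ub j) = (μ j : ℂ) • ⇑(ub j) := rfl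
    rw [h1, h2, h]
    funext i
    simp [Complex.real_smul]
    rfl
  set lamF := hF.eigenvalues with hlamFdef
  set uF := hF.eigenvectorBasis with huFdef
  have huF : ∀ j, T (uF j) = (lamF j : ℂ) • uF j := by
    intro j
    have h := hF.mulVec_eigenvectorBasis j
    apply Stmt7Aux.ee.symm.injective
    rw [hTdef, Stmt7Aux.ee_symm_lin]
    have h1 : Stmt7Aux.ee.symm (uF j) = ⇑(uF j) := rfl
    have h2 : Stmt7Aux.ee.symm ((lamF j : ℂ) • uF j) = (lamF j : ℂ) • ⇑(uF j) := rfl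
    rw [h1, h2, h]
    funext i
    simp [Complex.real_smul]
    rfl
  have hwheig : ∀ k, Th (wh k) = (μ (ι k) : ℂ) • wh k := by
    intro k
    show Matrix.toEuclideanLin Fh (Stmt7Aux.ee fun i => Vh₂ i k) = _
    rw [Stmt7Aux.lin_ee, hVh₂eig k]
    rfl
  have hTw : ∀ k, T (w k) = 0 := by
    intro k
    have hwk : (fun i => V₂ i k) = V₂ *ᵥ Pi.single k 1 := by
      funext i
      simp [Matrix.mulVec, dotProduct, Pi.single_apply, mul_ite]
    show Matrix.toEuclideanLin F (Stmt7Aux.ee fun i => V₂ i k) = 0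
    rw [Stmt7Aux.lin_ee]
    have h0 : F *ᵥ (fun i => V₂ i k) = 0 := (hV₂ker _).mpr ⟨Pi.single k 1, hwk⟩
    rw [h0]
    rfl
  have hKer : ∀ z : EuclideanSpace ℂ (Fin N), T z = 0 → ∃ a : Fin (N - s) → ℂ, z = ∑ k, a k • w k := by
    intro z hz
    have h0 : F *ᵥ (Stmt7Aux.ee.symm z) = 0 := by
      have h1 := congrArg Stmt7Aux.ee.symm hz
      rw [hTdef, Stmt7Aux.ee_symm_lin] at h1
      exact h1.trans rfl
    obtain ⟨a, ha⟩ := (hV₂ker _).mp h0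
    refine ⟨a, ?_⟩
    have h2 := congrArg Stmt7Aux.ee ha
    rw [Equiv.apply_symm_apply, Stmt7Aux.mulVec_eq_sum_col] at h2
    exact h2
  have hPSDre : ∀ z : EuclideanSpace ℂ (Fin N), 0 ≤ RCLike.re ⟪z, T z⟫ := by
    intro z
    have h := hPSD.dotProduct_mulVec_nonneg (Stmt7Aux.ee.symm z)
    have heq : ⟪z, T z⟫ =
        dotProduct (star (Stmt7Aux.ee.symm z)) (F *ᵥ Stmt7Aux.ee.symm z) := by
      rw [EuclideanSpace.inner_eq_star_dotProduct, dotProduct_comm]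
      rfl
    rw [heq]
    exact (Complex.le_def.mp h).1
  have hcoefzero : ∀ z : EuclideanSpace ℂ (Fin N), (∀ k, ⟪w k, z⟫ = 0) →
      ∀ j, lamF j = 0 → ⟪uF j, z⟫ = 0 := by
    intro z hz j hj
    have h0 : T (uF j) = 0 := by rw [huF j, hj]; simp
    obtain ⟨a, ha⟩ := hKer _ h0
    rw [ha]
    exact Stmt7Aux.inner_orth a hz
  have hFlow : ∀ z : EuclideanSpace ℂ (Fin N), (∀ k, ⟪w k, z⟫ = 0) →
      lam * ‖z‖ ≤ ‖T z‖ := by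
    intro z hz
    have h1 : ‖T z‖^2 = ∑ j, (lamF j)^2 * ‖⟪uF j, z⟫‖^2 :=
      Stmt7Aux.norm_lin_sq uF T hTsym lamF huF z
    have h2 : ‖z‖^2 = ∑ j, ‖⟪uF j, z⟫‖^2 := Stmt7Aux.parseval uF z
    have h3 : lam^2 * ‖z‖^2 ≤ ‖T z‖^2 := by
      rw [h1, h2, Finset.mul_sum]
      apply Finset.sum_le_sum
      intro j _
      by_cases hj : lamF j = 0
      · rw [hcoefzero z hz j hj]; simp
      · have hl := hlam_min j hj
        have hsq : lam^2 ≤ (lamF j)^2 := by nlinarith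
        nlinarith [sq_nonneg ‖⟪uF j, z⟫‖, hsq]
    nlinarith [norm_nonneg (T z), norm_nonneg z,
      mul_nonneg (le_of_lt hlam_pos) (norm_nonneg z)]
  have hFquad : ∀ z : EuclideanSpace ℂ (Fin N), (∀ k, ⟪w k, z⟫ = 0) →
      lam * ‖z‖^2 ≤ RCLike.re ⟪z, T z⟫ := by
    intro z hz
    rw [Stmt7Aux.quadform uF T hTsym lamF huF z, Stmt7Aux.parseval uF z, Finset.mul_sum]
    apply Finset.sum_le_sum
    intro j _
    by_cases hj : lamF j = 0
    · rw [hcoefzero z hz j hj]; simp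
    · have hl := hlam_min j hj
      nlinarith [sq_nonneg ‖⟪uF j, z⟫‖]
  set W := Submodule.span ℂ (Set.range w) with hWdef
  have hWrank : Module.finrank ℂ W = N - s := by
    have h1 : Set.range w = w '' ((Finset.univ : Finset (Fin (N - s))) : Set (Fin (N - s))) := by
      simp
    rw [hWdef, h1, Stmt7Aux.finrank_span_orthonormal hw]
    simp
  have hWker : ∀ z ∈ W, T z = 0 := by
    intro z hzW
    have hle : W ≤ LinearMap.ker T :=
      Submodule.span_le.mpr (by rintro _ ⟨k, rfl⟩; exact LinearMap.mem_ker.mpr (hTw k))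
    exact LinearMap.mem_ker.mp (hle hzW)
  have hμup : ∀ k, μ (ι k) ≤ ε := by
    intro k
    set J : Finset (Fin N) := Finset.univ.filter (fun j => μ (ι k) ≤ μ j) with hJ
    have hcard : s + 1 ≤ J.card := by
      have hsub : insert (ι k) ((Finset.univ.image ι)ᶜ) ⊆ J := by
        intro j hj
        rcases Finset.mem_insert.mp hj with h | h
        · subst h; simp [hJ]
        · have hjr : j ∉ Set.range ι := by
            rintro ⟨k', hk'⟩
            exact (Finset.mem_compl.mp h) (Finset.mem_image.mpr ⟨k', Finset.mem_univ _, hk'⟩)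
          simp only [hJ, Finset.mem_filter, Finset.mem_univ, true_and]
          exact hsmall k j hjr
      have hc1 : ((Finset.univ.image ι)ᶜ : Finset (Fin N)).card = s := by
        rw [Finset.card_compl, Finset.card_image_of_injective _ hι]
        simp
        omega
      have hnotmem : ι k ∉ ((Finset.univ.image ι)ᶜ : Finset (Fin N)) := by
        simp [Finset.mem_image]
      calc s + 1 = (insert (ι k) ((Finset.univ.image ι)ᶜ : Finset (Fin N))).card := by
            rw [Finset.card_insert_of_notMem hnotmem, hc1]
        _ ≤ J.card := Finset.card_le_card hsub
    obtain ⟨z, hz0, hzS, hzW⟩ := Stmt7Aux.exists_nonzero_inter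
      (Submodule.span ℂ (ub '' (J : Set (Fin N)))) W (by
        rw [Stmt7Aux.finrank_span_orthonormal ub.orthonormal, hWrank, finrank_euclideanSpace_fin]
        omega)
    have hzker : T z = 0 := hWker z hzW
    have hup : RCLike.re ⟪z, Th z⟫ ≤ ε * ‖z‖^2 := by
      have h1 : Th z = Eop z := by rw [hsplit z, hzker, zero_add]
      rw [h1]
      calc RCLike.re ⟪z, Eop z⟫ ≤ ‖z‖ * ‖Eop z‖ := re_inner_le_norm _ _
        _ ≤ ‖z‖ * (ε * ‖z‖) := mul_le_mul_of_nonneg_left (hEople z) (norm_nonneg z)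
        _ = ε * ‖z‖^2 := by ring
    have hlow : μ (ι k) * ‖z‖^2 ≤ RCLike.re ⟪z, Th z⟫ := by
      rw [Stmt7Aux.quadform ub Th hThsym μ hub z, Stmt7Aux.parseval ub z, Finset.mul_sum]
      apply Finset.sum_le_sum
      intro j _
      by_cases hj : j ∈ J
      · have h2 : μ (ι k) ≤ μ j := (Finset.mem_filter.mp hj).2
        nlinarith [sq_nonneg ‖⟪ub j, z⟫‖]
      · rw [Stmt7Aux.inner_eq_zero_of_mem_span ub.orthonormal (J : Set (Fin N)) hzS
          (by simpa using hj)]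
        simp
    have hz2 : 0 < ‖z‖^2 := by
      have := norm_pos_iff.mpr hz0
      positivity
    nlinarith
  have hμlowB : ∀ j, j ∉ Set.range ι → lam - ε ≤ μ j := by
    intro j₀ hj₀
    set J : Finset (Fin N) := Finset.univ.filter (fun j => μ j ≤ μ j₀) with hJ
    have hcard : N - s + 1 ≤ J.card := by
      have hsub : insert j₀ (Finset.univ.image ι) ⊆ J := by
        intro j hj
        rcases Finset.mem_insert.mp hj with h | h
        · subst h; simp [hJ]
        · obtain ⟨k', _, rfl⟩ := Finset.mem_image.mp h
          simp only [hJ, Finset.mem_filter, Finset.mem_univ, true_and]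
          exact hsmall k' j₀ hj₀
      have hnotmem : j₀ ∉ Finset.univ.image ι := by
        intro hmem
        obtain ⟨k', _, hk'⟩ := Finset.mem_image.mp hmem
        exact hj₀ ⟨k', hk'⟩
      calc N - s + 1 = (insert j₀ (Finset.univ.image ι)).card := by
            rw [Finset.card_insert_of_notMem hnotmem, Finset.card_image_of_injective _ hι]
            simp
        _ ≤ J.card := Finset.card_le_card hsub
    have hWorth : Module.finrank ℂ (Wᗮ) = s := by
      have h := Submodule.finrank_add_finrank_orthogonal (K := W)
      rw [hWrank, finrank_euclideanSpace_fin] at h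
      omega
    obtain ⟨z, hz0, hzS, hzW⟩ := Stmt7Aux.exists_nonzero_inter
      (Submodule.span ℂ (ub '' (J : Set (Fin N)))) Wᗮ (by
        rw [Stmt7Aux.finrank_span_orthonormal ub.orthonormal, hWorth, finrank_euclideanSpace_fin]
        omega)
    have hwz : ∀ k, ⟪w k, z⟫ = 0 := fun k =>
      (Submodule.mem_orthogonal W z).mp hzW (w k) (Submodule.subset_span ⟨k, rfl⟩)
    have hlow : (lam - ε) * ‖z‖^2 ≤ RCLike.re ⟪z, Th z⟫ := by
      have h1 : RCLike.re ⟪z, Th z⟫ = RCLike.re ⟪z, T z⟫ + RCLike.re ⟪z, Eop z⟫ := by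
        rw [hsplit z, inner_add_right, map_add]
      have h3 : |RCLike.re ⟪z, Eop z⟫| ≤ ε * ‖z‖^2 := by
        calc |RCLike.re ⟪z, Eop z⟫| ≤ ‖(⟪z, Eop z⟫ : ℂ)‖ := RCLike.abs_re_le_norm _
          _ ≤ ‖z‖ * ‖Eop z‖ := norm_inner_le_norm _ _
          _ ≤ ‖z‖ * (ε * ‖z‖) := mul_le_mul_of_nonneg_left (hEople z) (norm_nonneg z)
          _ = ε * ‖z‖^2 := by ring
      have h2 : -(ε * ‖z‖^2) ≤ RCLike.re ⟪z, Eop z⟫ := neg_le_of_abs_le h3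
      have h4 := hFquad z hwz
      linarith
    have hup : RCLike.re ⟪z, Th z⟫ ≤ μ j₀ * ‖z‖^2 := by
      rw [Stmt7Aux.quadform ub Th hThsym μ hub z, Stmt7Aux.parseval ub z, Finset.mul_sum]
      apply Finset.sum_le_sum
      intro j _
      by_cases hj : j ∈ J
      · have h2 : μ j ≤ μ j₀ := (Finset.mem_filter.mp hj).2
        nlinarith [sq_nonneg ‖⟪ub j, z⟫‖]
      · rw [Stmt7Aux.inner_eq_zero_of_mem_span ub.orthonormal (J : Set (Fin N)) hzS
          (by simpa using hj)]
        simp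
    have hz2 : 0 < ‖z‖^2 := by
      have := norm_pos_iff.mpr hz0
      positivity
    nlinarith
  have hμlow : ∀ k, -ε ≤ μ (ι k) := by
    intro k
    have hn1 : ⟪wh k, wh k⟫ = 1 := by
      simpa using orthonormal_iff_ite.mp hwo k k
    have h1 : RCLike.re ⟪wh k, Th (wh k)⟫ = μ (ι k) := by
      rw [hwheig k, inner_smul_right, hn1, mul_one]
      simp
    have h2 : RCLike.re ⟪wh k, Th (wh k)⟫
        = RCLike.re ⟪wh k, T (wh k)⟫ + RCLike.re ⟪wh k, Eop (wh k)⟫ := by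
      rw [hsplit, inner_add_right, map_add]
    have hwn : ‖wh k‖ = 1 := hwo.1 k
    have h3 : |RCLike.re ⟪wh k, Eop (wh k)⟫| ≤ ε := by
      calc |RCLike.re ⟪wh k, Eop (wh k)⟫| ≤ ‖(⟪wh k, Eop (wh k)⟫ : ℂ)‖ :=
            RCLike.abs_re_le_norm _
        _ ≤ ‖wh k‖ * ‖Eop (wh k)‖ := norm_inner_le_norm _ _
        _ = ‖Eop (wh k)‖ := by rw [hwn, one_mul]
        _ ≤ ε := by simpa [hwn] using hEople (wh k)
    have h4 := hPSDre (wh k)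
    have h5 := neg_le_of_abs_le h3
    linarith
  have hstarlem : ∀ a : Fin (N - s) → ℂ,
      lam * ‖(∑ k, a k • wh k) - Stmt7Aux.proj w (∑ k, a k • wh k)‖
        ≤ 2 * ε * ‖∑ k, a k • wh k‖ := by
    intro a
    set v := ∑ k, a k • wh k with hv
    have hThv : Th v = ∑ k, (a k * (μ (ι k) : ℂ)) • wh k := by
      rw [hv, map_sum]
      congr 1
      funext k
      rw [LinearMap.map_smul, hwheig k, smul_smul]
    have h1 : ‖Th v‖^2 ≤ ε^2 * ‖v‖^2 := by
      rw [hThv, Stmt7Aux.norm_sum_sq hwo]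
      have hv2 : ‖v‖^2 = ∑ k, ‖a k‖^2 := Stmt7Aux.norm_sum_sq hwo a
      rw [hv2, Finset.mul_sum]
      apply Finset.sum_le_sum
      intro k _
      rw [norm_mul]
      have hμabs : ‖((μ (ι k) : ℝ) : ℂ)‖ ≤ ε := by
        rw [Complex.norm_real, Real.norm_eq_abs, abs_le]
        exact ⟨hμlow k, hμup k⟩
      have hnn : (0:ℝ) ≤ ‖a k‖ := norm_nonneg _
      have hnn2 : (0:ℝ) ≤ ‖((μ (ι k) : ℝ) : ℂ)‖ := norm_nonneg _
      have hle : ‖a k‖ * ‖((μ (ι k) : ℝ) : ℂ)‖ ≤ ‖a k‖ * ε := mul_le_mul_of_nonneg_left hμabs hnn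
      have hnn3 : (0:ℝ) ≤ ‖a k‖ * ‖((μ (ι k) : ℝ) : ℂ)‖ := mul_nonneg hnn hnn2
      calc (‖a k‖ * ‖((μ (ι k) : ℝ) : ℂ)‖)^2 ≤ (‖a k‖ * ε)^2 := by nlinarith
        _ = ε^2 * ‖a k‖^2 := by ring
    have hThvn : ‖Th v‖ ≤ ε * ‖v‖ := by
      nlinarith [norm_nonneg (Th v), norm_nonneg v, mul_nonneg hεnn (norm_nonneg v)]
    have hTv : ‖T v‖ ≤ 2 * ε * ‖v‖ := by
      have hTv1 : T v = Th v - Eop v := by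
        rw [hsplit v]
        abel
      rw [hTv1]
      calc ‖Th v - Eop v‖ ≤ ‖Th v‖ + ‖Eop v‖ := norm_sub_le _ _
        _ ≤ ε * ‖v‖ + ε * ‖v‖ := add_le_add hThvn (hEople v)
        _ = 2 * ε * ‖v‖ := by ring
    have hdw : ∀ k, ⟪w k, v - Stmt7Aux.proj w v⟫ = 0 := fun k =>
      Stmt7Aux.inner_proj_diff hw v k
    have hTd : T (v - Stmt7Aux.proj w v) = T v := by
      rw [map_sub]
      have hzero : T (Stmt7Aux.proj w v) = 0 := by
        rw [Stmt7Aux.proj, map_sum]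
        apply Finset.sum_eq_zero
        intro k _
        rw [LinearMap.map_smul, hTw k, smul_zero]
      rw [hzero, sub_zero]
    have hlow2 := hFlow _ hdw
    rw [hTd] at hlow2
    linarith
  have hD1 : ∀ y : EuclideanSpace ℂ (Fin N), (∀ k, ⟪w k, y⟫ = 0) →
      ‖Stmt7Aux.proj wh y‖ ≤ 2 * ε / lam * ‖y‖ := by
    intro y hy
    set v := Stmt7Aux.proj wh y with hvdef
    have hvsum : v = ∑ k, (⟪wh k, y⟫ : ℂ) • wh k := rfl
    have hvy : ‖v‖^2 = RCLike.re ⟪v, y⟫ := by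
      have hiv : ⟪v, y⟫ = ∑ k, (starRingEnd ℂ) ⟪wh k, y⟫ * ⟪wh k, y⟫ := by
        rw [hvsum, sum_inner]
        congr 1
        funext k
        rw [inner_smul_left]
      rw [hvdef, Stmt7Aux.norm_proj_sq hwo, hiv, map_sum]
      congr 1
      funext k
      rw [RCLike.conj_mul]
      simp [← Complex.ofReal_pow]
    have hsplit3 : ⟪v, y⟫ = ⟪v - Stmt7Aux.proj w v, y⟫ := by
      have h2 : ⟪Stmt7Aux.proj w v, y⟫ = 0 := Stmt7Aux.inner_orth _ hy
      rw [inner_sub_left, h2, sub_zero]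
    have hstar := hstarlem (fun k => ⟪wh k, y⟫)
    rw [← hvsum] at hstar
    have hdn : ‖v - Stmt7Aux.proj w v‖ ≤ 2 * ε / lam * ‖v‖ := by
      rw [div_mul_eq_mul_div, le_div_iff₀ hlam_pos]
      linarith
    have hkey : ‖v‖^2 ≤ 2 * ε / lam * ‖v‖ * ‖y‖ := by
      rw [hvy, hsplit3]
      calc RCLike.re ⟪v - Stmt7Aux.proj w v, y⟫ ≤ ‖v - Stmt7Aux.proj w v‖ * ‖y‖ :=
            re_inner_le_norm _ _
        _ ≤ 2 * ε / lam * ‖v‖ * ‖y‖ :=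
            mul_le_mul_of_nonneg_right hdn (norm_nonneg y)
    by_cases hv0 : ‖v‖ = 0
    · rw [hv0]
      positivity
    · have hvpos : 0 < ‖v‖ := lt_of_le_of_ne (norm_nonneg v) (Ne.symm hv0)
      nlinarith
  set U := Submodule.span ℂ (Set.range wh) with hUdef
  have hUinv : ∀ u ∈ U, Th u ∈ U := by
    intro u hu
    induction hu using Submodule.span_induction with
    | mem v hv =>
      obtain ⟨k, rfl⟩ := hv
      rw [hwheig k]
      exact Submodule.smul_mem _ _ (Submodule.subset_span ⟨k, rfl⟩)
    | zero => rw [map_zero]; exact Submodule.zero_mem U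
    | add a b _ _ ha hb => rw [map_add]; exact Submodule.add_mem _ ha hb
    | smul c a _ ha => rw [LinearMap.map_smul]; exact Submodule.smul_mem _ _ ha
  have hKinv : ∀ q ∈ Uᗮ, Th q ∈ Uᗮ := by
    intro q hq
    rw [Submodule.mem_orthogonal]
    intro u hu
    rw [← hThsym u q]
    exact (Submodule.mem_orthogonal U q).mp hq _ (hUinv u hu)
  have hubU : ∀ j, μ j < lam - ε → ub j ∈ U := by
    intro j hν
    have hrange : ∀ j', μ j' = μ j → j' ∈ Set.range ι := by
      intro j' hj'
      by_contra hc
      have hb := hμlowB j' hc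
      rw [hj'] at hb
      linarith
    set Kν : Finset (Fin (N - s)) := Finset.univ.filter (fun k => μ (ι k) = μ j) with hKν
    set Jν : Finset (Fin N) := Finset.univ.filter (fun j' => μ j' = μ j) with hJν
    have hJKcard : Jν.card = Kν.card := by
      have himg : Jν = Kν.image ι := by
        ext j'
        constructor
        · intro hj'
          have hj'2 : μ j' = μ j := (Finset.mem_filter.mp hj').2
          obtain ⟨k', hk'⟩ := hrange j' hj'2
          refine Finset.mem_image.mpr ⟨k', ?_, hk'⟩
          refine Finset.mem_filter.mpr ⟨Finset.mem_univ _, ?_⟩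
          rw [hk']
          exact hj'2
        · intro hj'
          obtain ⟨k', hk', rfl⟩ := Finset.mem_image.mp hj'
          exact Finset.mem_filter.mpr ⟨Finset.mem_univ _, (Finset.mem_filter.mp hk').2⟩
      rw [himg, Finset.card_image_of_injective _ hι]
    set Esp := LinearMap.ker (Th - (μ j : ℂ) •
      (LinearMap.id : EuclideanSpace ℂ (Fin N) →ₗ[ℂ] EuclideanSpace ℂ (Fin N))) with hEspDef
    have hEspMem : ∀ x : EuclideanSpace ℂ (Fin N), x ∈ Esp ↔ Th x = (μ j : ℂ) • x := by
      intro x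
      rw [hEspDef, LinearMap.mem_ker, LinearMap.sub_apply, LinearMap.smul_apply,
        LinearMap.id_apply, sub_eq_zero]
    have hSle : Submodule.span ℂ (wh '' (Kν : Set (Fin (N - s)))) ≤ Esp := by
      rw [Submodule.span_le]
      rintro _ ⟨k, hk, rfl⟩
      rw [SetLike.mem_coe, hEspMem, hwheig k]
      have hkk : μ (ι k) = μ j := by
        have := Finset.mem_coe.mp hk
        rw [hKν] at this
        exact (Finset.mem_filter.mp this).2
      rw [hkk]
    have hEspLe : Esp ≤ Submodule.span ℂ (ub '' (Jν : Set (Fin N))) := by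
      intro x hx
      rw [hEspMem] at hx
      have hcoef : ∀ j', j' ∉ Jν → ⟪ub j', x⟫ = 0 := by
        intro j' hj'
        have hne : μ j' ≠ μ j := by
          intro hcon
          exact hj' (by rw [hJν]; exact Finset.mem_filter.mpr ⟨Finset.mem_univ _, hcon⟩)
        have h1 : (μ j : ℂ) * ⟪ub j', x⟫ = ⟪ub j', Th x⟫ := by
          rw [hx, inner_smul_right]
        have h2 : ⟪ub j', Th x⟫ = (μ j' : ℂ) * ⟪ub j', x⟫ :=
          Stmt7Aux.coef_lin ub Th hThsym μ hub x j'
        have h3 : ((μ j : ℂ) - (μ j' : ℂ)) * ⟪ub j', x⟫ = 0 := by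
          rw [sub_mul, h1, h2]
          ring
        rcases mul_eq_zero.mp h3 with h | h
        · exfalso
          apply hne
          have h4 := sub_eq_zero.mp h
          exact_mod_cast h4.symm
        · exact h
      have hrepr := ub.sum_repr' x
      rw [← hrepr]
      apply Submodule.sum_mem
      intro j' _
      by_cases hj' : j' ∈ Jν
      · exact Submodule.smul_mem _ _ (Submodule.subset_span ⟨j', hj', rfl⟩)
      · rw [hcoef j' hj', zero_smul]
        exact Submodule.zero_mem _
    have hrankS : Module.finrank ℂ (Submodule.span ℂ (wh '' (Kν : Set (Fin (N - s)))))
        = Kν.card := Stmt7Aux.finrank_span_orthonormal hwo Kν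
    have hrankE : Module.finrank ℂ Esp ≤ Kν.card := by
      calc Module.finrank ℂ Esp
          ≤ Module.finrank ℂ (Submodule.span ℂ (ub '' (Jν : Set (Fin N)))) :=
            Submodule.finrank_mono hEspLe
        _ = Jν.card := Stmt7Aux.finrank_span_orthonormal ub.orthonormal Jν
        _ = Kν.card := hJKcard
    have hSeq : Submodule.span ℂ (wh '' (Kν : Set (Fin (N - s)))) = Esp :=
      Submodule.eq_of_le_of_finrank_le hSle (by rw [hrankS]; exact hrankE)
    have hjmem : ub j ∈ Esp := by rw [hEspMem]; exact hub j
    rw [← hSeq] at hjmem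
    exact Submodule.span_mono (Set.image_subset_range wh (Kν : Set (Fin (N - s)))) hjmem
  have hKquad : ∀ q ∈ Uᗮ, (lam - ε) * ‖q‖^2 ≤ RCLike.re ⟪q, Th q⟫ := by
    intro q hq
    rw [Stmt7Aux.quadform ub Th hThsym μ hub q, Stmt7Aux.parseval ub q, Finset.mul_sum]
    apply Finset.sum_le_sum
    intro j _
    by_cases hj : μ j < lam - ε
    · have h0 : ⟪ub j, q⟫ = 0 := (Submodule.mem_orthogonal U q).mp hq (ub j) (hubU j hj)
      rw [h0]
      simp
    · push_neg at hj
      nlinarith [sq_nonneg ‖⟪ub j, q⟫‖]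
  have hD2 : ∀ z : EuclideanSpace ℂ (Fin N), (∀ k, ⟪wh k, z⟫ = 0) →
      ‖Stmt7Aux.proj w z‖ ≤ 2 * ε / lam * ‖z‖ := by
    intro z hz
    have hzK : z ∈ Uᗮ := by
      rw [Submodule.mem_orthogonal]
      intro u hu
      induction hu using Submodule.span_induction with
      | mem v hv => obtain ⟨k, rfl⟩ := hv; exact hz k
      | zero => simp
      | add a b _ _ ha hb => rw [inner_add_left, ha, hb, add_zero]
      | smul c a _ ha => rw [inner_smul_left, ha, mul_zero]
    set G : (Uᗮ : Submodule ℂ (EuclideanSpace ℂ (Fin N))) →ₗ[ℂ] Uᗮ :=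
      Th.restrict hKinv with hG
    have hGapp : ∀ q : Uᗮ, (G q : EuclideanSpace ℂ (Fin N)) = Th ↑q := by
      intro q
      rfl
    have hGinj : Function.Injective G := by
      rw [← LinearMap.ker_eq_bot]
      rw [Submodule.eq_bot_iff]
      intro q hqker
      have hq0 : Th ↑q = 0 := by
        rw [← hGapp q, hqker]
        rfl
      have hquad := hKquad ↑q q.2
      rw [hq0, inner_zero_right, map_zero] at hquad
      have hq2 : ‖(q : EuclideanSpace ℂ (Fin N))‖^2 ≤ 0 := by nlinarith
      have hq3 : ‖(q : EuclideanSpace ℂ (Fin N))‖^2 = 0 :=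
        le_antisymm hq2 (sq_nonneg _)
      have hqn : ‖(q : EuclideanSpace ℂ (Fin N))‖ = 0 :=
        pow_eq_zero_iff two_ne_zero |>.mp hq3
      exact Subtype.ext (norm_eq_zero.mp hqn)
    have hGsurj : Function.Surjective G := LinearMap.injective_iff_surjective.mp hGinj
    obtain ⟨y, hy⟩ := hGsurj ⟨z, hzK⟩
    have hThy : Th ↑y = z := by
      have h1 := congrArg Subtype.val hy
      rw [hGapp y] at h1
      exact h1
    have hyb : (lam - ε) * ‖(y : EuclideanSpace ℂ (Fin N))‖ ≤ ‖z‖ := by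
      have h1 := hKquad ↑y y.2
      rw [hThy] at h1
      have h2 : RCLike.re ⟪(y : EuclideanSpace ℂ (Fin N)), z⟫
          ≤ ‖(y : EuclideanSpace ℂ (Fin N))‖ * ‖z‖ := re_inner_le_norm _ _
      by_cases hy0 : ‖(y : EuclideanSpace ℂ (Fin N))‖ = 0
      · rw [hy0]
        simp [norm_nonneg]
      · have hypos : 0 < ‖(y : EuclideanSpace ℂ (Fin N))‖ :=
          lt_of_le_of_ne (norm_nonneg _) (Ne.symm hy0)
        nlinarith
    have hprojTy : Stmt7Aux.proj w (T ↑y) = 0 := by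
      rw [Stmt7Aux.proj]
      apply Finset.sum_eq_zero
      intro k _
      rw [← hTsym (w k) ↑y, hTw k, inner_zero_left, zero_smul]
    have hpz : Stmt7Aux.proj w z = Stmt7Aux.proj w (Eop ↑y) := by
      rw [← hThy, hsplit, Stmt7Aux.proj_add, hprojTy, zero_add]
    rw [hpz]
    calc ‖Stmt7Aux.proj w (Eop ↑y)‖ ≤ ‖Eop ↑y‖ := Stmt7Aux.norm_proj_le hw _
      _ ≤ ε * ‖(y : EuclideanSpace ℂ (Fin N))‖ := hEople _
      _ ≤ 2 * ε / lam * ‖z‖ := by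
          have h2 : ‖(y : EuclideanSpace ℂ (Fin N))‖ ≤ ‖z‖ / (lam - ε) := by
            rw [le_div_iff₀ hlamε]
            linarith [hyb]
          have h3 : ε * (‖z‖ / (lam - ε)) ≤ 2 * ε / lam * ‖z‖ := by
            have e1 : ε * (‖z‖ / (lam - ε)) = ε * ‖z‖ / (lam - ε) := by ring
            have e2 : 2 * ε / lam * ‖z‖ = 2 * ε * ‖z‖ / lam := by ring
            rw [e1, e2, div_le_div_iff₀ hlamε hlam_pos]
            nlinarith [mul_nonneg hεnn (norm_nonneg z)]
          calc ε * ‖(y : EuclideanSpace ℂ (Fin N))‖ ≤ ε * (‖z‖ / (lam - ε)) :=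
                mul_le_mul_of_nonneg_left h2 hεnn
            _ ≤ _ := h3
  have hcnn : 0 ≤ 2 * ε / lam := by positivity
  intro x hx
  set φv : Fin N → ℂ := φ x with hφv
  set φe : EuclideanSpace ℂ (Fin N) := Stmt7Aux.ee φv with hφe
  have hN0 : 0 < N := lt_of_le_of_lt (Nat.zero_le s) hs
  have hφ0 : φv ⟨0, hN0⟩ ≠ 0 := by
    rw [hφv, hφ x ⟨0, hN0⟩]
    exact Complex.exp_ne_zero _
  have hφne : φe ≠ 0 := by
    intro hc
    apply hφ0
    have hz : φv = 0 := by
      have h1 := congrArg Stmt7Aux.ee.symm hc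
      exact (Stmt7Aux.ee.symm_apply_apply φv).symm.trans (h1.trans rfl)
    rw [hz]
    rfl
  have hφpos : 0 < ‖φe‖ := norm_pos_iff.mpr hφne
  have hEvφ : evNorm φv = ‖φe‖ := Stmt7Aux.evNorm_eq φv
  have hEvh : evNorm (Vh₂ᴴ *ᵥ φv) = ‖Stmt7Aux.proj wh φe‖ := by
    rw [Stmt7Aux.norm_proj_eq hwo, evNorm]
    congr 1
    refine Finset.sum_congr rfl fun k _ => ?_
    rw [Stmt7Aux.mulVec_conjT]
  have hEvV : evNorm (V₂ᴴ *ᵥ φv) = ‖Stmt7Aux.proj w φe‖ := by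
    rw [Stmt7Aux.norm_proj_eq hw, evNorm]
    congr 1
    refine Finset.sum_congr rfl fun k _ => ?_
    rw [Stmt7Aux.mulVec_conjT]
  set av := ‖Stmt7Aux.proj wh φe‖ with hav
  set bv := ‖Stmt7Aux.proj w φe‖ with hbv
  have h1 : av ≤ bv + 2 * ε / lam * ‖φe‖ := by
    have hdec : φe = Stmt7Aux.proj w φe + (φe - Stmt7Aux.proj w φe) :=
      (add_sub_cancel _ _).symm
    calc av = ‖Stmt7Aux.proj wh (Stmt7Aux.proj w φe + (φe - Stmt7Aux.proj w φe))‖ := by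
          rw [hav, ← hdec]
      _ = ‖Stmt7Aux.proj wh (Stmt7Aux.proj w φe)
            + Stmt7Aux.proj wh (φe - Stmt7Aux.proj w φe)‖ := by rw [Stmt7Aux.proj_add]
      _ ≤ ‖Stmt7Aux.proj wh (Stmt7Aux.proj w φe)‖
            + ‖Stmt7Aux.proj wh (φe - Stmt7Aux.proj w φe)‖ := norm_add_le _ _
      _ ≤ bv + 2 * ε / lam * ‖φe‖ := by
          apply add_le_add
          · exact Stmt7Aux.norm_proj_le hwo _
          · calc ‖Stmt7Aux.proj wh (φe - Stmt7Aux.proj w φe)‖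
                ≤ 2 * ε / lam * ‖φe - Stmt7Aux.proj w φe‖ :=
                  hD1 _ (fun k => Stmt7Aux.inner_proj_diff hw φe k)
              _ ≤ 2 * ε / lam * ‖φe‖ :=
                  mul_le_mul_of_nonneg_left (Stmt7Aux.norm_diff_proj_le hw φe) hcnn
  have h2 : bv ≤ av + 2 * ε / lam * ‖φe‖ := by
    have hdec : φe = Stmt7Aux.proj wh φe + (φe - Stmt7Aux.proj wh φe) :=
      (add_sub_cancel _ _).symm
    calc bv = ‖Stmt7Aux.proj w (Stmt7Aux.proj wh φe + (φe - Stmt7Aux.proj wh φe))‖ := by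
          rw [hbv, ← hdec]
      _ = ‖Stmt7Aux.proj w (Stmt7Aux.proj wh φe)
            + Stmt7Aux.proj w (φe - Stmt7Aux.proj wh φe)‖ := by rw [Stmt7Aux.proj_add]
      _ ≤ ‖Stmt7Aux.proj w (Stmt7Aux.proj wh φe)‖
            + ‖Stmt7Aux.proj w (φe - Stmt7Aux.proj wh φe)‖ := norm_add_le _ _
      _ ≤ av + 2 * ε / lam * ‖φe‖ := by
          apply add_le_add
          · exact Stmt7Aux.norm_proj_le hw _
          · calc ‖Stmt7Aux.proj w (φe - Stmt7Aux.proj wh φe)‖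
                ≤ 2 * ε / lam * ‖φe - Stmt7Aux.proj wh φe‖ :=
                  hD2 _ (fun k => Stmt7Aux.inner_proj_diff hwo φe k)
              _ ≤ 2 * ε / lam * ‖φe‖ :=
                  mul_le_mul_of_nonneg_left (Stmt7Aux.norm_diff_proj_le hwo φe) hcnn
  rw [hEvh, hEvV, hEvφ]
  rw [div_sub_div_same, abs_div, abs_of_pos hφpos, div_le_iff₀ hφpos]
  have habs : |av - bv| ≤ 2 * ε / lam * ‖φe‖ :=
    abs_le.mpr ⟨by linarith, by linarith⟩
  exact habs
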